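/- The dimension of the space of curl-free vector fields on ℝ^d with polynomial components of total degree at most ℓ−1 equals C(ℓ+d,d) − 1. -/

import Mathlib

open MvPolynomial

/-- The space of curl-free vector fields on ℝ^d whose components are polynomials of total
degree at most `ℓ − 1`. -/
noncomputable def curlFreePolyFields (d ℓ : ℕ) : Submodule ℝ (Fin d → MvPolynomial (Fin d) ℝ) where
  carrier := {v | (∀ i j : Fin d, pderiv i (v j) = pderiv j (v i)) ∧
    ∀ i : Fin d, (v i).totalDegree ≤ ℓ - 1}
  add_mem' := by
    intro a b ha hb
    refine ⟨fun i j => ?_, fun i => ?_⟩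
    · show pderiv i (a j + b j) = pderiv j (a i + b i)
      rw [map_add, map_add, ha.1 i j, hb.1 i j]
    · exact le_trans (totalDegree_add (a i) (b i)) (max_le (ha.2 i) (hb.2 i))
  zero_mem' := by
    refine ⟨fun i j => by simp, fun i => by simp⟩
  smul_mem' := by
    intro c a ha
    refine ⟨fun i j => ?_, fun i => ?_⟩
    · show pderiv i (c • a j) = pderiv j (c • a i)
      rw [Derivation.map_smul, Derivation.map_smul, ha.1 i j]
    · exact le_trans (totalDegree_smul_le c (a i)) (ha.2 i)

namespace CurlFreeAux

variable {d ℓ : ℕ}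

lemma degree_eq_sum_univ (s : Fin d →₀ ℕ) : s.degree = ∑ i, s i :=
  Finset.sum_subset (Finset.subset_univ _)
    (fun x _ hx => by simpa using Finsupp.notMem_support_iff.mp hx)

lemma sum_eq_degree (s : Fin d →₀ ℕ) : (s.sum fun _ e => e) = s.degree := rfl

lemma degree_add_single (s : Fin d →₀ ℕ) (j : Fin d) :
    (s + Finsupp.single j 1).degree = s.degree + 1 := by
  classical
  simp [degree_eq_sum_univ, Finset.sum_add_distrib, Finsupp.single_apply]

lemma coeff_pderiv (j : Fin d) (p : MvPolynomial (Fin d) ℝ) (s : Fin d →₀ ℕ) :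
    coeff s (pderiv j p) = ((s j : ℝ) + 1) * coeff (s + Finsupp.single j 1) p := by
  classical
  induction p using MvPolynomial.induction_on' with
  | add p q hp hq => rw [map_add, coeff_add, coeff_add, hp, hq]; ring
  | monomial t a =>
    rw [pderiv_monomial, coeff_monomial, coeff_monomial]
    by_cases h : Finsupp.single j 1 ≤ t
    · have ht : t - Finsupp.single j 1 = s ↔ t = s + Finsupp.single j 1 := by
        constructor
        · rintro rfl; rw [tsub_add_cancel_of_le h]
        · rintro rfl; rw [add_tsub_cancel_right]
      by_cases he : t = s + Finsupp.single j 1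
      · rw [if_pos (ht.mpr he), if_pos he]
        subst he
        push_cast [Finsupp.add_apply, Finsupp.single_apply]
        simp
        ring
      · rw [if_neg (fun hh => he (ht.mp hh)), if_neg he]; ring
    · have htj : t j = 0 := by
        by_contra hne
        exact h (Finsupp.single_le_iff.mpr (Nat.one_le_iff_ne_zero.mpr hne))
      have he : t ≠ s + Finsupp.single j 1 := by
        intro hh
        apply absurd htj
        rw [hh]; simp
      rw [if_neg he, htj]
      simp

lemma totalDegree_pderiv_le (j : Fin d) (p : MvPolynomial (Fin d) ℝ) {n : ℕ}
    (h : p.totalDegree ≤ n) : (pderiv j p).totalDegree ≤ n - 1 := by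
  rw [totalDegree]
  apply Finset.sup_le
  intro s hs
  rw [mem_support_iff, coeff_pderiv] at hs
  have h2 : coeff (s + Finsupp.single j 1) p ≠ 0 := fun hh => hs (by rw [hh, mul_zero])
  have h3 := le_totalDegree (p := p) (mem_support_iff.mpr h2)
  rw [sum_eq_degree, degree_add_single] at h3
  show (s.sum fun _ e => e) ≤ n - 1
  rw [sum_eq_degree]
  omega

lemma pderiv_pderiv_comm (i j : Fin d) (p : MvPolynomial (Fin d) ℝ) :
    pderiv i (pderiv j p) = pderiv j (pderiv i p) := by
  classical
  apply MvPolynomial.ext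
  intro s
  rw [coeff_pderiv, coeff_pderiv, coeff_pderiv, coeff_pderiv, add_right_comm]
  by_cases h : i = j
  · subst h; ring
  · simp only [Finsupp.add_apply, Finsupp.single_apply, if_neg h, if_neg (Ne.symm h)]
    push_cast
    ring

lemma pderiv_hc (j : Fin d) (k : ℕ) (φ : MvPolynomial (Fin d) ℝ) :
    pderiv j (homogeneousComponent (k + 1) φ) = homogeneousComponent k (pderiv j φ) := by
  apply MvPolynomial.ext
  intro s
  rw [coeff_pderiv, coeff_homogeneousComponent, coeff_homogeneousComponent, coeff_pderiv,
    degree_add_single]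
  by_cases h : s.degree = k
  · rw [if_pos (by omega), if_pos h]
  · rw [if_neg (by omega), if_neg h, mul_zero]

lemma coeff_X_mul_pderiv (i : Fin d) (r : MvPolynomial (Fin d) ℝ) (s : Fin d →₀ ℕ) :
    coeff s (X i * pderiv i r) = (s i : ℝ) * coeff s r := by
  classical
  rw [coeff_X_mul']
  by_cases h : i ∈ s.support
  · have h1 : (1 : ℕ) ≤ s i := Nat.one_le_iff_ne_zero.mpr (Finsupp.mem_support_iff.mp h)
    have hle : Finsupp.single i 1 ≤ s := Finsupp.single_le_iff.mpr h1
    rw [if_pos h, coeff_pderiv, tsub_add_cancel_of_le hle]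
    have h2 : ((s - Finsupp.single i 1 : Fin d →₀ ℕ)) i = s i - 1 := by
      rw [Finsupp.tsub_apply, Finsupp.single_apply, if_pos rfl]
    rw [h2, Nat.cast_sub h1]
    push_cast
    ring
  · rw [if_neg h]
    have : s i = 0 := Finsupp.notMem_support_iff.mp h
    rw [this]
    simp

lemma hc_euler (k : ℕ) (r : MvPolynomial (Fin d) ℝ) :
    homogeneousComponent k (∑ i, X i * pderiv i r) = k • homogeneousComponent k r := by
  apply MvPolynomial.ext
  intro s
  rw [MvPolynomial.coeff_smul, coeff_homogeneousComponent, coeff_homogeneousComponent,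
    MvPolynomial.coeff_sum]
  simp_rw [coeff_X_mul_pderiv]
  rw [← Finset.sum_mul]
  by_cases h : s.degree = k
  · rw [if_pos h, if_pos h]
    rw [← Nat.cast_sum, ← degree_eq_sum_univ, h]
    simp [mul_comm]
  · rw [if_neg h, if_neg h, smul_zero]

lemma exists_potential (v : Fin d → MvPolynomial (Fin d) ℝ)
    (hv : v ∈ curlFreePolyFields d ℓ) (hℓ : 1 ≤ ℓ) :
    ∃ p : MvPolynomial (Fin d) ℝ, p.totalDegree ≤ ℓ ∧ ∀ j, pderiv j p = v j := by
  classical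
  set q : MvPolynomial (Fin d) ℝ := ∑ i, X i * v i with hq
  refine ⟨∑ k ∈ Finset.range ℓ, (((k : ℝ) + 1)⁻¹) • homogeneousComponent (k + 1) q, ?_, ?_⟩
  · refine le_trans (totalDegree_finset_sum _ _) (Finset.sup_le ?_)
    intro k hk
    refine le_trans (totalDegree_smul_le _ _) ?_
    rw [totalDegree]
    apply Finset.sup_le
    intro s hs
    rw [mem_support_iff, coeff_homogeneousComponent] at hs
    rw [sum_eq_degree]
    by_cases h : s.degree = k + 1
    · rw [h]; exact Nat.succ_le_of_lt (Finset.mem_range.mp hk)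
    · exact absurd (if_neg h) hs
  · intro j
    rw [map_sum]
    have key : ∀ k ∈ Finset.range ℓ,
        pderiv j ((((k : ℝ) + 1)⁻¹) • homogeneousComponent (k + 1) q)
          = homogeneousComponent k (v j) := by
      intro k _
      rw [(pderiv j).map_smul, pderiv_hc]
      have hdq : pderiv j q = v j + ∑ i, X i * pderiv i (v j) := by
        rw [hq, map_sum]
        have : ∀ i, pderiv j (X i * v i)
            = (if j = i then (1 : MvPolynomial (Fin d) ℝ) else 0) * v i
              + X i * pderiv i (v j) := by
          intro i
          rw [pderiv_mul, hv.1 j i]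
          congr 1
          congr 1
          by_cases h : j = i
          · subst h; rw [if_pos rfl, pderiv_X_self]
          · rw [if_neg h, pderiv_X_of_ne (fun hh => h hh.symm)]
        simp_rw [this]
        rw [Finset.sum_add_distrib]
        congr 1
        simp [Finset.sum_ite_eq]
      rw [hdq, map_add, hc_euler]
      have : homogeneousComponent k (v j) + k • homogeneousComponent k (v j)
          = (k + 1) • homogeneousComponent k (v j) := by
        rw [add_nsmul, one_nsmul, add_comm]
      rw [this, ← Nat.cast_smul_eq_nsmul ℝ, smul_smul, Nat.cast_add, Nat.cast_one,
        inv_mul_cancel₀ (by positivity), one_smul]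
    rw [Finset.sum_congr rfl key]
    have hdeg : (v j).totalDegree + 1 ≤ ℓ := by
      have := hv.2 j
      omega
    exact ((Finset.sum_subset (Finset.range_subset_range.mpr hdeg)
      (fun k _ hk => homogeneousComponent_eq_zero k (v j) (by
        have h9 : ¬ k < (v j).totalDegree + 1 := Finset.mem_range.not.mp hk
        omega))).symm).trans (sum_homogeneousComponent (v j))

lemma card_aux (d ℓ : ℕ) [Fintype {n : Fin d →₀ ℕ | (n.sum fun _ e => e) ≤ ℓ}] :
    Fintype.card {n : Fin d →₀ ℕ | (n.sum fun _ e => e) ≤ ℓ} = (ℓ + d).choose d := by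
  classical
  have e1 : {n : Fin d →₀ ℕ | (n.sum fun _ e => e) ≤ ℓ} ≃ {P : Fin d → ℕ // ∑ i, P i ≤ ℓ} :=
    Finsupp.equivFunOnFinite.subtypeEquiv (fun s => by
      rw [Set.mem_setOf_eq, Finsupp.sum_fintype _ _ (fun _ => rfl)]
      exact Iff.rfl)
  have e2 : {P : Fin d → ℕ // ∑ i, P i ≤ ℓ} ≃ {Q : Fin (d + 1) → ℕ // ∑ i, Q i = ℓ} :=
    { toFun := fun P => ⟨Fin.snoc P.1 (ℓ - ∑ i, P.1 i), by
        rw [Fin.sum_univ_castSucc]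
        simp only [Fin.snoc_castSucc, Fin.snoc_last]
        exact Nat.add_sub_cancel' P.2⟩
      invFun := fun Q => ⟨fun i => Q.1 i.castSucc, by
        have h := Q.2
        rw [Fin.sum_univ_castSucc] at h
        simpa using Nat.le.intro h⟩
      left_inv := fun P => Subtype.ext (funext fun i => by simp)
      right_inv := fun Q => Subtype.ext (funext fun i => by
        refine Fin.lastCases ?_ (fun i => ?_) i
        · have h := Q.2
          rw [Fin.sum_univ_castSucc] at h
          simp only [Fin.snoc_last]
          beta_reduce
          omega
        · simp) }
  have e3 := Sym.equivNatSumOfFintype (Fin (d + 1)) ℓ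
  have : Nat.card {n : Fin d →₀ ℕ | (n.sum fun _ e => e) ≤ ℓ}
      = Nat.card (Sym (Fin (d + 1)) ℓ) :=
    Nat.card_congr ((e1.trans e2).trans e3.symm)
  rw [Nat.card_eq_fintype_card, Nat.card_eq_fintype_card] at this
  rw [this, Sym.card_sym_eq_choose, Fintype.card_fin]
  have h1 : d + 1 + ℓ - 1 = ℓ + d := by omega
  rw [h1, Nat.add_comm ℓ d, Nat.choose_symm_add]

lemma finrank_restrict (d ℓ : ℕ) :
    Module.finrank ℝ (restrictTotalDegree (Fin d) ℝ ℓ) = (ℓ + d).choose d := by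
  classical
  have hfin : {n : Fin d →₀ ℕ | (n.sum fun _ e => e) ≤ ℓ}.Finite := by
    have := Finsupp.finite_of_degree_le (σ := Fin d) ℓ
    convert this using 2
    funext n
    rw [sum_eq_degree]
  haveI : Fintype {n : Fin d →₀ ℕ | (n.sum fun _ e => e) ≤ ℓ} := hfin.fintype
  exact (Module.finrank_eq_card_basis
    (basisRestrictSupport ℝ {n : Fin d →₀ ℕ | (n.sum fun _ e => e) ≤ ℓ})).trans (card_aux d ℓ)

end CurlFreeAux

open CurlFreeAux

/-- The dimension of the space of curl-free polynomial vector fields of total degree at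
most `ℓ − 1` on ℝ^d equals `C(ℓ+d, d) − 1`. -/
theorem finrank_curlFreePolyFields (d ℓ : ℕ) (hℓ : 1 ≤ ℓ) :
    Module.finrank ℝ (curlFreePolyFields d ℓ) = Nat.choose (ℓ + d) d - 1 := by
  classical
  set G : restrictTotalDegree (Fin d) ℝ ℓ →ₗ[ℝ] (Fin d → MvPolynomial (Fin d) ℝ) :=
    (LinearMap.pi fun i => ((pderiv i).toLinearMap :
        MvPolynomial (Fin d) ℝ →ₗ[ℝ] MvPolynomial (Fin d) ℝ)).comp
      (Submodule.subtype _) with hG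
  have hGapply : ∀ (p : restrictTotalDegree (Fin d) ℝ ℓ) (j : Fin d),
      G p j = pderiv j (p : MvPolynomial (Fin d) ℝ) := fun p j => rfl
  have hrange : LinearMap.range G = curlFreePolyFields d ℓ := by
    apply le_antisymm
    · rintro _ ⟨p, rfl⟩
      refine ⟨fun i j => ?_, fun i => ?_⟩
      · exact pderiv_pderiv_comm i j _
      · exact totalDegree_pderiv_le i _ ((mem_restrictTotalDegree _ _ _).mp p.2)
    · intro v hv
      obtain ⟨p, hp1, hp2⟩ := exists_potential v hv hℓ
      exact ⟨⟨p, (mem_restrictTotalDegree _ _ _).mpr hp1⟩, funext fun j => hp2 j⟩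
  have h1mem : (1 : MvPolynomial (Fin d) ℝ) ∈ restrictTotalDegree (Fin d) ℝ ℓ := by
    rw [mem_restrictTotalDegree]
    simp
  have hker : LinearMap.ker G = Submodule.span ℝ {(⟨1, h1mem⟩ : restrictTotalDegree (Fin d) ℝ ℓ)} := by
    apply le_antisymm
    · intro p hp
      rw [LinearMap.mem_ker] at hp
      have hzero : ∀ j, pderiv j (p : MvPolynomial (Fin d) ℝ) = 0 := by
        intro j
        have := congrFun hp j
        exact this
      have hconst : (p : MvPolynomial (Fin d) ℝ)
          = MvPolynomial.C (coeff 0 (p : MvPolynomial (Fin d) ℝ)) := by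
        apply MvPolynomial.ext
        intro s
        rw [coeff_C]
        by_cases hs : (0 : Fin d →₀ ℕ) = s
        · rw [if_pos hs, ← hs]
        · rw [if_neg hs]
          obtain ⟨j, hj⟩ : ∃ j, s j ≠ 0 := by
            by_contra hc
            push_neg at hc
            apply hs
            ext j
            simp [hc j]
          have h1 : (1 : ℕ) ≤ s j := Nat.one_le_iff_ne_zero.mpr hj
          have hle : Finsupp.single j 1 ≤ s := Finsupp.single_le_iff.mpr h1
          have hcp := coeff_pderiv j (p : MvPolynomial (Fin d) ℝ) (s - Finsupp.single j 1)
          rw [hzero j, coeff_zero, tsub_add_cancel_of_le hle] at hcp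
          have h3 : ((((s - Finsupp.single j 1 : Fin d →₀ ℕ)) j : ℝ) + 1) ≠ 0 := by
            positivity
          rcases mul_eq_zero.mp hcp.symm with h | h
          · exact absurd h h3
          · exact h
      apply Submodule.mem_span_singleton.mpr
      refine ⟨coeff 0 (p : MvPolynomial (Fin d) ℝ), ?_⟩
      apply Subtype.ext
      show coeff 0 (p : MvPolynomial (Fin d) ℝ) • (1 : MvPolynomial (Fin d) ℝ)
        = (p : MvPolynomial (Fin d) ℝ)
      rw [MvPolynomial.smul_eq_C_mul, mul_one]
      exact hconst.symm
    · rw [Submodule.span_le, Set.singleton_subset_iff, SetLike.mem_coe, LinearMap.mem_ker]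
      funext j
      show pderiv j (1 : MvPolynomial (Fin d) ℝ) = 0
      exact pderiv_one
  have hrn := LinearMap.finrank_range_add_finrank_ker G
  rw [hrange, hker, finrank_span_singleton (by
    intro hc
    have := congrArg (Subtype.val) hc
    exact one_ne_zero this), finrank_restrict d ℓ] at hrn
  have hpos : 1 ≤ (ℓ + d).choose d := Nat.choose_pos (by omega)
  omega
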